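/- If a tree model (T, ω, (S_e), (C_v)) with full behavior 𝔅 is essential (i.e., 𝔅|_e = S_e for every edge e), then 𝔅|_v = C_v for every vertex v. -/

import Mathlib

open Module

variable {F : Type*} [Field F] {I V : Type*} [Fintype I] [Fintype V]

section TreeModel

variable (F) (G : SimpleGraph V) (ω : I → V)
  (S : G.edgeSet → Type*) [∀ e, AddCommGroup (S e)] [∀ e, Module F (S e)]

/-- The local configuration at a vertex `v` of a global configuration: the symbol
variables indexed by `ω⁻¹(v)` together with the state variables on edges incident
with `v`. -/
noncomputable def localizeL (v : V) :
    ((I → F) × ((e : G.edgeSet) → S e)) →ₗ[F]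
      ((↥(ω ⁻¹' {v}) → F) × ((e : {e : G.edgeSet // v ∈ (e : Sym2 V)}) → S e.val)) :=
  LinearMap.prod
    ((LinearMap.funLeft F F Subtype.val).comp (LinearMap.fst F _ _))
    ((LinearMap.pi (fun e => LinearMap.proj e.val)).comp (LinearMap.snd F _ _))

/-- The full behavior of a tree model: all global configurations whose local
configuration at every vertex `v` satisfies the local constraint `Cv v`. -/
noncomputable def fullBehavior
    (Cv : ∀ v : V, Submodule F
      ((↥(ω ⁻¹' {v}) → F) × ((e : {e : G.edgeSet // v ∈ (e : Sym2 V)}) → S e.val))) :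
    Submodule F ((I → F) × ((e : G.edgeSet) → S e)) :=
  ⨅ v : V, (Cv v).comap (localizeL F G ω S v)

/-- Projection of a global configuration onto the state variable at edge `e`. -/
noncomputable def projEdge (e : G.edgeSet) :
    ((I → F) × ((e : G.edgeSet) → S e)) →ₗ[F] S e :=
  (LinearMap.proj e).comp (LinearMap.snd F _ _)

end TreeModel

section Aux
open SimpleGraph Walk

lemma tree_getVert_one_eq {V : Type*} {G : SimpleGraph V} (hT : G.IsTree)
    {v w u : V} (hw : w ≠ v) (hu : u ≠ v) (hadj : G.Adj w u)
    {p : G.Walk v w} (hp : p.IsPath) {q : G.Walk v u} (hq : q.IsPath) :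
    p.getVert 1 = q.getVert 1 := by
  classical
  by_cases hmem : u ∈ p.support
  · have htu : (p.takeUntil u hmem).IsPath := hp.takeUntil hmem
    have hq2 : q = p.takeUntil u hmem := ((hT.existsUnique_path v u).unique hq htu)
    have hlen : 1 ≤ (p.takeUntil u hmem).length := by
      rcases Nat.eq_zero_or_pos (p.takeUntil u hmem).length with h0 | h1
      · exact absurd (Walk.eq_of_length_eq_zero h0) (Ne.symm hu)
      · exact h1
    rw [hq2]
    conv_lhs => rw [← p.take_spec hmem]
    rw [Walk.getVert_append]
    split_ifs with hlt
    · rfl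
    · rw [Walk.getVert_of_length_le _ (Nat.le_of_not_lt hlt)]
      have : 1 - (p.takeUntil u hmem).length = 0 := by omega
      rw [this, Walk.getVert_zero]
  · have hq' : (p.concat hadj).IsPath := by
      rw [← isPath_reverse_iff, Walk.reverse_concat]
      exact (hp.reverse).cons (by rwa [Walk.support_reverse, List.mem_reverse])
    have hq2 : q = p.concat hadj := (hT.existsUnique_path v u).unique hq hq'
    have hlen : 1 ≤ p.length := by
      rcases Nat.eq_zero_or_pos p.length with h0 | h1
      · exact absurd (Walk.eq_of_length_eq_zero h0) (Ne.symm hw)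
      · exact h1
    rw [hq2, Walk.concat_eq_append, Walk.getVert_append]
    split_ifs with hlt
    · rfl
    · rw [Walk.getVert_of_length_le _ (Nat.le_of_not_lt hlt)]
      have : 1 - p.length = 0 := by omega
      rw [this, Walk.getVert_zero]

lemma tree_getVert_one_adj {V : Type*} {G : SimpleGraph V} (hT : G.IsTree)
    {v w : V} (hadj : G.Adj v w) {p : G.Walk v w} (hp : p.IsPath) :
    p.getVert 1 = w := by
  have hpath : (Walk.cons hadj Walk.nil).IsPath := by
    refine Walk.IsPath.nil.cons ?_
    simp [hadj.ne]
  have : p = Walk.cons hadj Walk.nil := (hT.existsUnique_path v w).unique hp hpath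
  rw [this]
  rfl

end Aux

/-- if a tree model is essential (every state space is fully used by the
full behavior), then the set of local configurations of the full behavior at each vertex
is the whole local constraint code: `𝔅|_v = C_v`. -/
theorem essential_local_configs (G : SimpleGraph V) (hT : G.IsTree) (ω : I → V)
    (S : G.edgeSet → Type*) [∀ e, AddCommGroup (S e)] [∀ e, Module F (S e)]
    (Cv : ∀ v : V, Submodule F
      ((↥(ω ⁻¹' {v}) → F) × ((e : {e : G.edgeSet // v ∈ (e : Sym2 V)}) → S e.val)))
    (hEss : ∀ e : G.edgeSet,
      (fullBehavior F G ω S Cv).map (projEdge F G S e) = ⊤) :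
    ∀ v : V, (fullBehavior F G ω S Cv).map (localizeL F G ω S v) = Cv v := by
  classical
  intro v
  apply le_antisymm
  · rw [Submodule.map_le_iff_le_comap]
    exact iInf_le _ v
  intro c hc
  -- unique paths from v
  have hup := hT.existsUnique_path
  set P : ∀ w : V, G.Walk v w := fun w => (hup v w).choose with hPdef
  have hPpath : ∀ w, (P w).IsPath := fun w => (hup v w).choose_spec.1
  -- the neighbor of v in the direction of w
  set nbr : V → V := fun w => (P w).getVert 1 with hnbrdef
  have hadj_nbr : ∀ w, w ≠ v → G.Adj v (nbr w) := by
    intro w hw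
    have hlen : 0 < (P w).length := by
      rcases Nat.eq_zero_or_pos (P w).length with h0 | h1
      · exact absurd (SimpleGraph.Walk.eq_of_length_eq_zero h0) (Ne.symm hw)
      · exact h1
    have := (P w).adj_getVert_succ hlen
    rwa [SimpleGraph.Walk.getVert_zero] at this
  have nbr_eq : ∀ w u, w ≠ v → u ≠ v → G.Adj w u → nbr w = nbr u := by
    intro w u hw hu hadj
    exact tree_getVert_one_eq hT hw hu hadj (hPpath w) (hPpath u)
  have nbr_adj : ∀ w, G.Adj v w → nbr w = w := by
    intro w hadj
    exact tree_getVert_one_adj hT hadj (hPpath w)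
  -- the branch edge towards w
  set branch : ∀ w : V, w ≠ v → {e : G.edgeSet // v ∈ (e : Sym2 V)} :=
    fun w h => ⟨⟨s(v, nbr w), (G.mem_edgeSet).mpr (hadj_nbr w h)⟩,
      Sym2.mem_mk_left _ _⟩ with hbranchdef
  -- pick a representative global configuration for each branch
  have hB : ∀ e : {e : G.edgeSet // v ∈ (e : Sym2 V)},
      ∃ b ∈ fullBehavior F G ω S Cv, projEdge F G S e.val b = c.2 e := by
    intro e
    have : c.2 e ∈ (⊤ : Submodule F (S e.val)) := Submodule.mem_top
    rw [← hEss e.val] at this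
    exact Submodule.mem_map.mp this
  choose B hB1 hB2 using hB
  set g : V → ((I → F) × ((e : G.edgeSet) → S e)) :=
    fun w => if h : w = v then 0 else B (branch w h) with hgdef
  have hg : ∀ w u (hw : w ≠ v) (hu : u ≠ v), nbr w = nbr u → g w = g u := by
    intro w u hw hu h
    have hbe : branch w hw = branch u hu := by
      apply Subtype.ext; apply Subtype.ext
      show s(v, nbr w) = s(v, nbr u)
      rw [h]
    simp only [hgdef, dif_neg hw, dif_neg hu, hbe]
  -- pick a vertex ≠ v on an edge not containing v
  have hex : ∀ f : G.edgeSet, ¬ v ∈ (f : Sym2 V) →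
      ∃ w, w ∈ (f : Sym2 V) ∧ w ≠ v := by
    rintro ⟨f, hf⟩ h
    induction f using Sym2.ind with
    | _ a b =>
      exact ⟨a, Sym2.mem_mk_left _ _, fun hav => h (hav ▸ Sym2.mem_mk_left _ _)⟩
  choose pk hpk1 hpk2 using hex
  -- two vertices of an edge are equal or adjacent
  have hmem2 : ∀ (f : G.edgeSet) (w u : V), w ∈ (f : Sym2 V) → u ∈ (f : Sym2 V) →
      w = u ∨ G.Adj w u := by
    rintro ⟨f, hf⟩ w u hwf huf
    induction f using Sym2.ind with
    | _ a b =>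
      rw [SimpleGraph.mem_edgeSet] at hf
      rw [Sym2.mem_iff] at hwf huf
      rcases hwf with rfl | rfl <;> rcases huf with rfl | rfl
      · exact Or.inl rfl
      · exact Or.inr hf
      · exact Or.inr hf.symm
      · exact Or.inl rfl
  have hsame : ∀ (f : G.edgeSet) (w u : V), w ∈ (f : Sym2 V) → u ∈ (f : Sym2 V) →
      w ≠ v → u ≠ v → g w = g u := by
    intro f w u hwf huf hw hu
    rcases hmem2 f w u hwf huf with rfl | hadj
    · rfl
    · exact hg w u hw hu (nbr_eq w u hw hu hadj)
  -- the global configuration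
  set x : ((I → F) × ((e : G.edgeSet) → S e)) :=
    (fun i => if h : ω i = v then c.1 ⟨i, h⟩ else (g (ω i)).1 i,
     fun f => if h : v ∈ (f : Sym2 V) then c.2 ⟨f, h⟩ else (g (pk f h)).2 f)
    with hxdef
  have hxc : localizeL F G ω S v x = c := by
    refine Prod.ext ?_ ?_
    · funext i
      obtain ⟨i, hi⟩ := i
      have h : ω i = v := hi
      show x.1 i = c.1 ⟨i, hi⟩
      simp only [hxdef, dif_pos h]
    · funext e
      show x.2 e.val = c.2 e
      simp only [hxdef, dif_pos e.prop]
  refine Submodule.mem_map.mpr ⟨x, ?_, hxc⟩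
  rw [fullBehavior, Submodule.mem_iInf]
  intro w
  rw [Submodule.mem_comap]
  by_cases hw : w = v
  · subst hw
    rw [hxc]; exact hc
  · have hloc : localizeL F G ω S w x = localizeL F G ω S w (g w) := by
      refine Prod.ext ?_ ?_
      · funext i
        obtain ⟨i, hi⟩ := i
        have h : ω i = w := hi
        show x.1 i = (g w).1 i
        have hne : ω i ≠ v := h ▸ hw
        simp only [hxdef, dif_neg hne, h]
        rw [dif_neg hw]
      · funext e
        show x.2 e.val = (g w).2 e.val
        have hwe : w ∈ (e.val : Sym2 V) := e.prop
        by_cases hv : v ∈ (e.val : Sym2 V)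
        · -- the edge joins v and w
        -- e.val = s(v, w)
          have hvw : G.Adj v w := by
            rcases hmem2 e.val v w hv hwe with heq | hadj
            · exact absurd heq.symm hw
            · exact hadj
          have hval : (e.val : Sym2 V) = s(v, w) := by
            exact (Sym2.mem_and_mem_iff (fun hvw' => hw hvw'.symm)).mp ⟨hv, hwe⟩
          have hbe : branch w hw = ⟨e.val, hv⟩ := by
            apply Subtype.ext
            apply Subtype.ext
            show s(v, nbr w) = (e.val : Sym2 V)
            rw [nbr_adj w hvw, hval]
          have hgw : g w = B (branch w hw) := by simp only [hgdef, dif_neg hw]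
          rw [hgw]
          have : x.2 e.val = c.2 ⟨e.val, hv⟩ := by simp only [hxdef, dif_pos hv]
          rw [this]
          rw [hbe]
          exact (hB2 ⟨e.val, hv⟩).symm
        · have h1 : x.2 e.val = (g (pk e.val hv)).2 e.val := by
            simp only [hxdef, dif_neg hv]
          rw [h1, hsame e.val (pk e.val hv) w (hpk1 e.val hv) hwe (hpk2 e.val hv) hw]
    rw [hloc]
    have := (Submodule.mem_iInf _).mp (hB1 (branch w hw)) w
    rw [Submodule.mem_comap] at this
    have hgw : g w = B (branch w hw) := by simp only [hgdef, dif_neg hw]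
    rw [hgw]
    exact this
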